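/- arXiv:1407.4671 — 4 statements merged into one kernel-verified Lean document; each statement's English description precedes it below -/
import Mathlib

section
/- Let N ≥ 2 and L > 0. If x = (x_1,...,x_N) ∈ (ℝ^d)^N satisfies diam(Πx) := max_{i≠j} |x_i - x_j|_∞ > 3NL, then there exists a nonempty proper subset J ⊂ {1,...,N} such that the distance (in max-norm) between the sets {x_j : j ∈ J} and {x_j : j ∉ J} is greater than 3L. -/
/-- If a configuration `x ∈ (ℝ^d)^N` (max-norm) has diameter of its projection
greater than `3NL`, then there is a nonempty proper index subset `J` such that
the two clusters `{x_j : j ∈ J}` and `{x_j : j ∉ J}` are at max-norm distance `> 3L`. -/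
theorem stmt0 (d N : ℕ) (hN : 2 ≤ N) (L : ℝ) (hL : 0 < L)
    (x : Fin N → (Fin d → ℝ))
    (hdiam : ∃ i j : Fin N, i ≠ j ∧ 3 * N * L < ‖x i - x j‖) :
    ∃ J : Finset (Fin N), J.Nonempty ∧ J ≠ Finset.univ ∧
      ∀ i ∈ J, ∀ j ∉ J, 3 * L < ‖x i - x j‖ := by
  obtain ⟨i, j, hij, hd⟩ := hdiam
  set f : Fin N → ℝ := fun m => ‖x i - x m‖ with hf
  have hfi : f i = 0 := by simp [hf]
  have hfj : 3 * N * L < f j := hd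
  -- there is an empty annulus (3kL, 3(k+1)L]
  have key : ∃ k : ℕ, k < N ∧ ∀ m, ¬ (3 * k * L < f m ∧ f m ≤ 3 * (k + 1) * L) := by
    by_contra h
    push_neg at h
    have h' : ∀ k : Fin N, ∃ m : Fin N, 3 * (k : ℕ) * L < f m ∧ f m ≤ 3 * ((k : ℕ) + 1) * L := by
      intro k
      obtain ⟨m, hm1, hm2⟩ := h k k.isLt
      exact ⟨m, hm1, hm2⟩
    choose g hg1 hg2 using h'
    have hinj : Function.Injective g := by
      intro a b hab
      by_contra hne
      rcases lt_or_gt_of_ne (fun hv => hne (Fin.ext hv) : (a : ℕ) ≠ (b : ℕ)) with hlt | hlt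
      · have : 3 * ((a : ℕ) + 1) * L ≤ 3 * (b : ℕ) * L := by
          have : ((a : ℕ) + 1 : ℝ) ≤ (b : ℕ) := by exact_mod_cast hlt
          nlinarith
        have := lt_of_le_of_lt (le_trans (hg2 a) this) (hab ▸ hg1 b)
        rw [hab] at this
        exact lt_irrefl _ this
      · have : 3 * ((b : ℕ) + 1) * L ≤ 3 * (a : ℕ) * L := by
          have : ((b : ℕ) + 1 : ℝ) ≤ (a : ℕ) := by exact_mod_cast hlt
          nlinarith
        have := lt_of_le_of_lt (le_trans (hg2 b) this) (hg1 a)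
        rw [hab] at this
        exact lt_irrefl _ this
    have hsurj := Finite.surjective_of_injective hinj
    obtain ⟨k, hk⟩ := hsurj i
    have := hg1 k
    rw [hk, hfi] at this
    have : (0 : ℝ) ≤ 3 * (k : ℕ) * L := by positivity
    linarith [hg1 k, hk ▸ hfi]
  obtain ⟨k, hkN, hk⟩ := key
  refine ⟨Finset.univ.filter (fun m => f m ≤ 3 * k * L), ?_, ?_, ?_⟩
  · refine ⟨i, ?_⟩
    simp only [Finset.mem_filter, Finset.mem_univ, true_and, hfi]
    positivity
  · intro heq
    have hjmem : j ∈ Finset.univ.filter (fun m => f m ≤ 3 * k * L) := by rw [heq]; exact Finset.mem_univ j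
    simp only [Finset.mem_filter, Finset.mem_univ, true_and] at hjmem
    have hkL : 3 * (k : ℝ) * L ≤ 3 * N * L := by
      have : (k : ℝ) ≤ N := by exact_mod_cast hkN.le
      nlinarith
    linarith
  · intro a ha b hb
    simp only [Finset.mem_filter, Finset.mem_univ, true_and] at ha hb
    push_neg at hb
    have hb' : 3 * ((k : ℕ) + 1) * L < f b := by
      rcases le_or_gt (f b) (3 * ((k : ℕ) + 1) * L) with h1 | h1
      · exact absurd ⟨hb, h1⟩ (hk b)
      · exact h1
    have htri : f b ≤ f a + ‖x a - x b‖ := by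
      have : x i - x b = (x i - x a) + (x a - x b) := by abel
      calc f b = ‖(x i - x a) + (x a - x b)‖ := by rw [hf]; simp only; rw [this]
        _ ≤ ‖x i - x a‖ + ‖x a - x b‖ := norm_add_le _ _
        _ = f a + ‖x a - x b‖ := rfl
    have : 3 * ((k : ℕ) + 1) * L - 3 * (k : ℕ) * L = 3 * L := by ring
    linarith
end

section
/- Let G be a finite connected graph with graph distance d, u ∈ G, and let L ≥ ℓ ≥ 1 be integers. Let f : B_{L+1}(u) → ℝ≥0 and 0 < q < 1. Suppose every point x ∈ B_{L-ℓ}(u) is (ℓ,q)-regular for f, i.e. f(x) ≤ q · max{f(z) : z ∈ B_ℓ(x)}. Then f(u) ≤ q^{⌊L/ℓ⌋} · max{f(z) : z ∈ B_{L+1}(u)}. -/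
/-- Dominated decay on a finite connected graph, case of no singular set:
if every point of the ball `B_{L-ℓ}(u)` is `(ℓ,q)`-regular for `f`, then
`f(u) ≤ q^⌊L/ℓ⌋ · max_{B_{L+1}(u)} f`. -/
theorem stmt2 {V : Type*} [Fintype V] [DecidableEq V]
    (G : SimpleGraph V) (hG : G.Connected) (u : V)
    (L ℓ : ℕ) (hℓ : 1 ≤ ℓ) (hL : ℓ ≤ L)
    (q : ℝ) (hq0 : 0 < q) (hq1 : q < 1)
    (f : V → ℝ) (hf : ∀ x, 0 ≤ f x)
    (hreg : ∀ x, G.dist u x ≤ L - ℓ →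
      f x ≤ q * ⨆ z : {z : V // G.dist x z ≤ ℓ}, f z) :
    f u ≤ q ^ (L / ℓ) * ⨆ z : {z : V // G.dist u z ≤ L + 1}, f z := by
  set M := ⨆ z : {z : V // G.dist u z ≤ L + 1}, f z with hM
  have hbdd : BddAbove (Set.range fun z : {z : V // G.dist u z ≤ L + 1} => f z.1) :=
    Set.Finite.bddAbove (Set.finite_range _)
  have hle : ∀ x, G.dist u x ≤ L + 1 → f x ≤ M := fun x hx =>
    le_ciSup hbdd (⟨x, hx⟩ : {z : V // G.dist u z ≤ L + 1})
  have key : ∀ k, ∀ x, G.dist u x + k * ℓ ≤ L → f x ≤ q ^ k * M := by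
    intro k
    induction k with
    | zero =>
      intro x hx
      simpa using hle x (by omega)
    | succ k ih =>
      intro x hx
      have hmul : (k + 1) * ℓ = k * ℓ + ℓ := by ring
      have hx' : G.dist u x ≤ L - ℓ := by omega
      have h1 := hreg x hx'
      have hne2 : Nonempty {z : V // G.dist x z ≤ ℓ} := ⟨⟨x, by rw [SimpleGraph.dist_self]; omega⟩⟩
      obtain ⟨z₀, hz₀⟩ := Finite.exists_max (fun z : {z : V // G.dist x z ≤ ℓ} => f z.1)
      have h2 : (⨆ z : {z : V // G.dist x z ≤ ℓ}, f z.1) ≤ f z₀.1 := ciSup_le hz₀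
      have htr : G.dist u z₀.1 ≤ G.dist u x + G.dist x z₀.1 := hG.dist_triangle
      have h3 : f z₀.1 ≤ q ^ k * M := ih z₀.1 (by have := z₀.2; omega)
      calc f x ≤ q * (⨆ z : {z : V // G.dist x z ≤ ℓ}, f z.1) := h1
        _ ≤ q * (q ^ k * M) :=
            mul_le_mul_of_nonneg_left (le_trans h2 h3) hq0.le
        _ = q ^ (k + 1) * M := by ring
  have hfin := key (L / ℓ) u (by simpa [SimpleGraph.dist_self] using Nat.div_mul_le_self L ℓ)
  simpa using hfin
end

section
/- Let G be a finite connected graph, u ∈ G, L ≥ ℓ ≥ 1 integers, 0 < q < 1, and f : B_{L+1}(u) → ℝ≥0. Let S ⊂ B_L(u) be a 'singular' set covered by a union 𝒜 of concentric annuli {x : a_j ≤ d(x,u) ≤ b_j}, j = 1,...,J, of total width w(𝒜) = Σ_j (b_j - a_j + 1) ≤ L - ℓ. Assume every x ∈ B_{L-ℓ}(u) \ S is (ℓ,q)-regular for f: f(x) ≤ q · max{f(z) : d(z,x) ≤ ℓ}. Moreover assume f is (ℓ,q,S)-dominated: for every x ∈ B_{L-ℓ}(u) such that some full sphere L_r(u)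 = {y : d(y,u) = r} with r ≥ d(u,x), r ≤ L-ℓ is contained in the regular set, one has f(x) ≤ q · max{f(z) : d(z,u) ≤ r(x) + ℓ} where r(x) is the smallest such r. Then f(u) ≤ q^{(L - ℓ - w(𝒜))/ℓ} · max{f(z) : z ∈ B_{L+1}(u)}. -/
/-- Dominated decay on a finite connected graph with a singular set `S` covered by
annuli of total width `w ≤ L - ℓ`: if every point of `B_{L-ℓ}(u) \ S` is
`(ℓ,q)`-regular for `f` and `f` is `(ℓ,q,S)`-dominated, then
`f(u) ≤ q^((L-ℓ-w)/ℓ) · max_{B_{L+1}(u)} f`. -/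
theorem stmt3 {V : Type*} [Fintype V] [DecidableEq V]
    (G : SimpleGraph V) (hG : G.Connected) (u : V)
    (L ℓ : ℕ) (hℓ : 1 ≤ ℓ) (hL : ℓ ≤ L)
    (q : ℝ) (hq0 : 0 < q) (hq1 : q < 1)
    (f : V → ℝ) (hf : ∀ x, 0 ≤ f x)
    (J : ℕ) (a b : Fin J → ℕ) (hab : ∀ j, a j ≤ b j)
    (S : Set V) (hSball : ∀ x ∈ S, G.dist u x ≤ L)
    (hScov : ∀ x ∈ S, ∃ j, a j ≤ G.dist u x ∧ G.dist u x ≤ b j)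
    (w : ℕ) (hw : w = ∑ j, (b j - a j + 1)) (hwL : w ≤ L - ℓ)
    -- every non-singular point in `B_{L-ℓ}(u)` is `(ℓ,q)`-regular
    (hreg : ∀ x, G.dist u x ≤ L - ℓ → x ∉ S →
      f x ≤ q * ⨆ z : {z : V // G.dist x z ≤ ℓ}, f z)
    -- `(ℓ,q,S)`-domination: if `r` is the smallest radius `≥ d(u,x)` (and `≤ L-ℓ`)
    -- with a fully regular sphere `L_r(u)`, then `f x ≤ q · max_{B_{r+ℓ}(u)} f`
    (hdom : ∀ x, G.dist u x ≤ L - ℓ → ∀ r : ℕ, G.dist u x ≤ r → r ≤ L - ℓ →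
      (∀ y, G.dist u y = r → f y ≤ q * ⨆ z : {z : V // G.dist y z ≤ ℓ}, f z) →
      (∀ r', G.dist u x ≤ r' → r' < r →
        ¬ (∀ y, G.dist u y = r' → f y ≤ q * ⨆ z : {z : V // G.dist y z ≤ ℓ}, f z)) →
      f x ≤ q * ⨆ z : {z : V // G.dist u z ≤ r + ℓ}, f z) :
    f u ≤ q ^ ((((L : ℝ) - ℓ - w)) / ℓ) *
      ⨆ z : {z : V // G.dist u z ≤ L + 1}, f z := by
  classical
  set M : ℝ := ⨆ z : {z : V // G.dist u z ≤ L + 1}, f z with hMdef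
  have hbdd : ∀ (p : V → Prop), BddAbove (Set.range fun z : {z // p z} => f z) :=
    fun p => (Set.finite_range _).bddAbove
  have hle_sup : ∀ (A : ℕ) (x : V), G.dist u x ≤ A →
      f x ≤ ⨆ z : {z : V // G.dist u z ≤ A}, f z :=
    fun A x hx => le_ciSup (hbdd _) (⟨x, hx⟩ : {z : V // G.dist u z ≤ A})
  have hMball : ∀ A : ℕ, A ≤ L + 1 →
      (⨆ z : {z : V // G.dist u z ≤ A}, f z) ≤ M := by
    intro A hA
    haveI : Nonempty {z : V // G.dist u z ≤ A} :=
      ⟨⟨u, by rw [SimpleGraph.dist_self]; exact Nat.zero_le _⟩⟩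
    exact ciSup_le fun z => hle_sup (L + 1) z.1 (le_trans z.2 hA)
  have hM0 : 0 ≤ M := le_trans (hf u) (hle_sup (L + 1) u (by rw [SimpleGraph.dist_self]; exact Nat.zero_le _))
  -- Good radii
  set Good : ℕ → Prop :=
    fun r => ∀ y, G.dist u y = r → f y ≤ q * ⨆ z : {z : V // G.dist y z ≤ ℓ}, f z
    with hGooddef
  have hGood_of : ∀ r, r ≤ L - ℓ → (∀ j, ¬(a j ≤ r ∧ r ≤ b j)) → Good r := by
    intro r hr hann y hy
    have hyS : y ∉ S := by
      intro hyS
      obtain ⟨j, hj1, hj2⟩ := hScov y hyS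
      exact hann j ⟨by omega, by omega⟩
    exact hreg y (by omega) hyS
  set cnt : ℕ → ℕ := fun d => ((Finset.Icc d (L - ℓ)).filter Good).card with hcntdef
  have hcnt_anti : ∀ d d', d ≤ d' → cnt d' ≤ cnt d := by
    intro d d' h
    exact Finset.card_le_card (Finset.filter_subset_filter Good
      (Finset.Icc_subset_Icc_left h))
  -- main induction
  have main : ∀ k, ∀ x, G.dist u x ≤ L - ℓ → ℓ * k < cnt (G.dist u x) + ℓ →
      f x ≤ q ^ k * M := by
    intro k
    induction k with
    | zero =>
      intro x hx _
      simpa using le_trans (hle_sup (L + 1) x (by omega)) (le_of_eq hMdef.symm)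
    | succ k ih =>
      intro x hx hk
      have hlt : ℓ * k < cnt (G.dist u x) := by
        rw [Nat.mul_succ] at hk
        omega
      have hex : ∃ r, G.dist u x ≤ r ∧ r ≤ L - ℓ ∧ Good r := by
        have hpos : 0 < cnt (G.dist u x) := by omega
        simp only [hcntdef] at hpos
        have hne : ((Finset.Icc (G.dist u x) (L - ℓ)).filter Good).Nonempty :=
          Finset.card_pos.mp hpos
        obtain ⟨r, hr⟩ := hne
        rw [Finset.mem_filter, Finset.mem_Icc] at hr
        exact ⟨r, hr.1.1, hr.1.2, hr.2⟩
      set r := Nat.find hex with hrdef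
      obtain ⟨hr1, hr2, hr3⟩ := Nat.find_spec hex
      have hmin : ∀ r', G.dist u x ≤ r' → r' < r → ¬ Good r' := by
        intro r' h1 h2 h3
        exact Nat.find_min hex h2 ⟨h1, by omega, h3⟩
      have hstep := hdom x hx r hr1 hr2 hr3 hmin
      -- good radii below r+ℓ within [d, L-ℓ] are in [r, r+ℓ-1]
      have hsplit : cnt (G.dist u x) ≤ ℓ + cnt (r + ℓ) := by
        have hsub : (Finset.Icc (G.dist u x) (L - ℓ)).filter Good ⊆
            Finset.Icc r (r + ℓ - 1) ∪ (Finset.Icc (r + ℓ) (L - ℓ)).filter Good := by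
          intro s hs
          rw [Finset.mem_filter, Finset.mem_Icc] at hs
          have hsr : r ≤ s := by
            by_contra hc
            exact hmin s hs.1.1 (by omega) hs.2
          rw [Finset.mem_union, Finset.mem_Icc, Finset.mem_filter, Finset.mem_Icc]
          by_cases hcase : s ≤ r + ℓ - 1
          · exact Or.inl ⟨hsr, hcase⟩
          · exact Or.inr ⟨⟨by omega, hs.1.2⟩, hs.2⟩
        calc cnt (G.dist u x) ≤ (Finset.Icc r (r + ℓ - 1) ∪
              (Finset.Icc (r + ℓ) (L - ℓ)).filter Good).card :=
            Finset.card_le_card hsub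
          _ ≤ (Finset.Icc r (r + ℓ - 1)).card +
              ((Finset.Icc (r + ℓ) (L - ℓ)).filter Good).card :=
            Finset.card_union_le _ _
          _ ≤ ℓ + cnt (r + ℓ) := by
            simp only [hcntdef]
            rw [Nat.card_Icc]; omega
      by_cases hcase : r + ℓ ≤ L - ℓ
      · -- take a maximizer of f on B_{r+ℓ}(u)
        haveI : Nonempty {z : V // G.dist u z ≤ r + ℓ} :=
          ⟨⟨u, by rw [SimpleGraph.dist_self]; exact Nat.zero_le _⟩⟩
        obtain ⟨x', hx'⟩ := Finite.exists_max (fun z : {z : V // G.dist u z ≤ r + ℓ} => f z)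
        have hsup_le : (⨆ z : {z : V // G.dist u z ≤ r + ℓ}, f z) ≤ f x'.1 :=
          ciSup_le hx'
        have hx'd : G.dist u x'.1 ≤ L - ℓ := le_trans x'.2 hcase
        have hx'cnt : ℓ * k < cnt (G.dist u x'.1) + ℓ := by
          have := hcnt_anti (G.dist u x'.1) (r + ℓ) x'.2
          omega
        have hIH := ih x'.1 hx'd hx'cnt
        calc f x ≤ q * ⨆ z : {z : V // G.dist u z ≤ r + ℓ}, f z := hstep
          _ ≤ q * f x'.1 := by
            exact mul_le_mul_of_nonneg_left hsup_le (le_of_lt hq0)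
          _ ≤ q * (q ^ k * M) := mul_le_mul_of_nonneg_left hIH (le_of_lt hq0)
          _ = q ^ (k + 1) * M := by ring
      · -- then k = 0
        have hcle : cnt (G.dist u x) ≤ ℓ := by
          have h0 : cnt (r + ℓ) = 0 := by
            have : Finset.Icc (r + ℓ) (L - ℓ) = ∅ := Finset.Icc_eq_empty (by omega)
            simp [hcntdef, this]
          omega
        have hk0 : k = 0 := by
          by_contra hk0
          have : ℓ ≤ ℓ * k := Nat.le_mul_of_pos_right ℓ (Nat.pos_of_ne_zero hk0)
          omega
        subst hk0
        have hsup_le : (⨆ z : {z : V // G.dist u z ≤ r + ℓ}, f z) ≤ M :=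
          hMball (r + ℓ) (by omega)
        calc f x ≤ q * ⨆ z : {z : V // G.dist u z ≤ r + ℓ}, f z := hstep
          _ ≤ q * M := mul_le_mul_of_nonneg_left hsup_le (le_of_lt hq0)
          _ = q ^ (0 + 1) * M := by ring
  -- count good radii from 0
  have hcnt0 : L - ℓ + 1 ≤ cnt 0 + w := by
    have hbadsub : (Finset.Icc 0 (L - ℓ)).filter (fun r => ¬ Good r) ⊆
        Finset.univ.biUnion (fun j : Fin J => Finset.Icc (a j) (b j)) := by
      intro s hs
      rw [Finset.mem_filter, Finset.mem_Icc] at hs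
      rw [Finset.mem_biUnion]
      by_contra hc
      push_neg at hc
      refine hs.2 (hGood_of s hs.1.2 fun j hj => ?_)
      have := hc j (Finset.mem_univ j)
      rw [Finset.mem_Icc] at this
      exact this ⟨hj.1, hj.2⟩
    have hbadcard : ((Finset.Icc 0 (L - ℓ)).filter (fun r => ¬ Good r)).card ≤ w := by
      calc ((Finset.Icc 0 (L - ℓ)).filter (fun r => ¬ Good r)).card
          ≤ (Finset.univ.biUnion (fun j : Fin J => Finset.Icc (a j) (b j))).card :=
            Finset.card_le_card hbadsub
        _ ≤ ∑ j, (Finset.Icc (a j) (b j)).card := Finset.card_biUnion_le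
        _ = w := by
            rw [hw]
            exact Finset.sum_congr rfl fun j _ => by
              rw [Nat.card_Icc]; have := hab j; omega
    have hpart := Finset.card_filter_add_card_filter_not
      (s := Finset.Icc 0 (L - ℓ)) (p := Good)
    rw [Nat.card_Icc] at hpart
    simp only [hcntdef]
    omega
  -- choose k
  set k : ℕ := ⌈(((L : ℝ) - ℓ - w)) / ℓ⌉₊ with hkdef
  have hcastw : ((L - ℓ - w : ℕ) : ℝ) = (L : ℝ) - ℓ - w := by
    rw [Nat.cast_sub hwL, Nat.cast_sub hL]
  have hl0 : (0:ℝ) < ℓ := by exact_mod_cast hℓ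
  have he0 : 0 ≤ ((L : ℝ) - ℓ - w) / ℓ := by
    apply div_nonneg _ (le_of_lt hl0)
    rw [← hcastw]
    exact Nat.cast_nonneg _
  have hklb : ((L : ℝ) - ℓ - w) / ℓ ≤ k := Nat.le_ceil _
  have hcond : ℓ * k < cnt 0 + ℓ := by
    have h1 : (k : ℝ) < ((L : ℝ) - ℓ - w) / ℓ + 1 := Nat.ceil_lt_add_one he0
    have h2 : ((ℓ * k : ℕ) : ℝ) < ((L - ℓ - w + ℓ : ℕ) : ℝ) := by
      push_cast [hcastw]
      calc (ℓ:ℝ) * k < ℓ * (((L : ℝ) - ℓ - w) / ℓ + 1) :=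
            mul_lt_mul_of_pos_left h1 hl0
        _ = ((L : ℝ) - ℓ - w) + ℓ := by field_simp
    have h3 : ℓ * k < L - ℓ - w + ℓ := by exact_mod_cast h2
    omega
  have hfin := main k u (by rw [SimpleGraph.dist_self]; exact Nat.zero_le _)
    (by rw [SimpleGraph.dist_self]; exact hcond)
  have hqk : q ^ k ≤ q ^ (((L : ℝ) - ℓ - w) / ℓ) := by
    rw [← Real.rpow_natCast q k]
    exact Real.rpow_le_rpow_of_exponent_ge hq0 (le_of_lt hq1) hklb
  calc f u ≤ q ^ k * M := hfin
    _ ≤ q ^ (((L : ℝ) - ℓ - w) / ℓ) * M := mul_le_mul_of_nonneg_right hqk hM0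
end

section
/- Let x = (x_1,...,x_N) ∈ (ℝ^d)^N be a configuration with diam Πx > 3NL (weakly interactive). Then the 'thickened' projection Π Λ_{3L/2}(x) = ⋃_{j=1}^N B(x_j, 3L/2) (max-norm balls in ℝ^d) is disconnected; moreover there is a partition J ⊔ J^c = {1,...,N} with dist(⋃_{j∈J} B(x_j, 3L/2), ⋃_{j∈J^c} B(x_j, 3L/2)) > 0, and hence dist(⋃_{j∈J} B(x_j, L), ⋃_{j∈J^c} B(x_j, L)) > L. -/
/-- Decomposition of weakly interactive configurations: if `diam Πx > 3NL` then the
thickened projection `⋃_j B(x_j, 3L/2)` is disconnected; moreover there is a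
nonempty proper index set `J` with the `(3L/2)`-ball clusters at positive distance,
and hence the `L`-ball clusters at distance `> L`. -/
theorem stmt17 (d N : ℕ) (hN : 2 ≤ N) (L : ℝ) (hL : 0 < L)
    (x : Fin N → (Fin d → ℝ))
    (hdiam : ∃ i j : Fin N, i ≠ j ∧ 3 * N * L < ‖x i - x j‖) :
    ¬ IsPreconnected (⋃ j, Metric.closedBall (x j) (3 * L / 2)) ∧
    ∃ J : Finset (Fin N), J.Nonempty ∧ J ≠ Finset.univ ∧
      (∃ ε : ℝ, 0 < ε ∧
        ∀ p ∈ ⋃ j ∈ J, Metric.closedBall (x j) (3 * L / 2),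
        ∀ q ∈ ⋃ j ∈ Jᶜ, Metric.closedBall (x j) (3 * L / 2), ε ≤ dist p q) ∧
      (∀ p ∈ ⋃ j ∈ J, Metric.closedBall (x j) L,
       ∀ q ∈ ⋃ j ∈ Jᶜ, Metric.closedBall (x j) L, L < dist p q) := by
  classical
  obtain ⟨i, j, hij, hfar⟩ := hdiam
  obtain ⟨r, hr⟩ : ∃ r : Fin N → ℝ, r = fun a => ‖x a - x i‖ := ⟨_, rfl⟩
  have hrj : 3 * N * L < r j := by
    have : r j = ‖x i - x j‖ := by simp [hr, norm_sub_rev]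
    linarith [this ▸ hfar]
  have hri : r i = 0 := by simp [hr]
  -- pigeonhole: some interval [3kL, 3(k+1)L) contains no r a
  have hgap : ∃ k : Fin N, ∀ a : Fin N,
      ¬ (3 * (k : ℝ) * L ≤ r a ∧ r a < 3 * ((k : ℝ) + 1) * L) := by
    by_contra hcon
    push_neg at hcon
    choose f hf1 hf2 using hcon
    have hinj : Function.Injective f := by
      intro k k' hkk'
      have h1 := hf1 k; have h2 := hf2 k
      have h1' := hf1 k'; have h2' := hf2 k'
      rw [hkk'] at h1 h2
      have hk1 : (k : ℝ) < (k' : ℝ) + 1 := by nlinarith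
      have hk2 : (k' : ℝ) < (k : ℝ) + 1 := by nlinarith
      have : (k : ℕ) < (k' : ℕ) + 1 := by exact_mod_cast hk1
      have : (k' : ℕ) < (k : ℕ) + 1 := by exact_mod_cast hk2
      apply Fin.ext; omega
    have hsurj : Function.Surjective f := Finite.injective_iff_surjective.mp hinj
    obtain ⟨k, hk⟩ := hsurj j
    have h2 := hf2 k
    rw [hk] at h2
    have hkN : ((k : ℕ) : ℝ) + 1 ≤ (N : ℝ) := by exact_mod_cast k.isLt
    nlinarith
  obtain ⟨k, hk⟩ := hgap
  have hkpos : 0 < 3 * (k : ℝ) * L := by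
    have := hk i
    rw [hri] at this
    by_contra h
    push_neg at h
    exact this ⟨h, by positivity⟩
  obtain ⟨J, hJ⟩ : ∃ J : Finset (Fin N),
      J = Finset.univ.filter (fun a => r a < 3 * (k : ℝ) * L) := ⟨_, rfl⟩
  have hiJ : i ∈ J := by simp [hJ, hri, hkpos]
  have hjJ : j ∉ J := by
    simp only [hJ, Finset.mem_filter, Finset.mem_univ, true_and, not_lt]
    have hkN : ((k : ℕ) : ℝ) ≤ (N : ℝ) := by exact_mod_cast k.isLt.le
    nlinarith
  have hJb : ∀ b ∉ J, 3 * ((k : ℝ) + 1) * L ≤ r b := by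
    intro b hb
    simp only [hJ, Finset.mem_filter, Finset.mem_univ, true_and, not_lt] at hb
    have := hk b
    push_neg at this
    exact this hb
  -- cross separation
  have hsep : ∀ a ∈ J, ∀ b ∈ Jᶜ, 3 * L < ‖x a - x b‖ := by
    intro a ha b hb
    rw [Finset.mem_compl] at hb
    have hra : r a < 3 * (k : ℝ) * L := by
      simpa [hJ] using ha
    have hrb := hJb b hb
    have htri : r b - r a ≤ ‖x b - x a‖ := by
      rw [hr]
      have h := norm_sub_norm_le (x b - x i) (x a - x i)
      rw [sub_sub_sub_cancel_right] at h
      exact h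
    rw [norm_sub_rev] at htri
    linarith
  -- epsilon
  have hPne : (J ×ˢ Jᶜ).Nonempty :=
    ⟨(i, j), Finset.mem_product.mpr ⟨hiJ, Finset.mem_compl.mpr hjJ⟩⟩
  obtain ⟨m, hm, hmin⟩ := (J ×ˢ Jᶜ).exists_min_image
    (fun p => ‖x p.1 - x p.2‖) hPne
  have hex : ∃ ε : ℝ, 0 < ε ∧ ∀ a ∈ J, ∀ b ∈ Jᶜ, ε ≤ ‖x a - x b‖ - 3 * L := by
    obtain ⟨hm1, hm2⟩ := Finset.mem_product.mp hm
    refine ⟨‖x m.1 - x m.2‖ - 3 * L, by linarith [hsep m.1 hm1 m.2 hm2], ?_⟩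
    intro a ha b hb
    have := hmin (a, b) (Finset.mem_product.mpr ⟨ha, hb⟩)
    simpa using by linarith
  obtain ⟨ε, hεpos, hεle⟩ := hex
  -- separation of thickened clusters
  have hsep32 : ∀ p ∈ ⋃ a ∈ J, Metric.closedBall (x a) (3 * L / 2),
      ∀ q ∈ ⋃ b ∈ Jᶜ, Metric.closedBall (x b) (3 * L / 2), ε ≤ dist p q := by
    intro p hp q hq
    simp only [Set.mem_iUnion] at hp hq
    obtain ⟨a, ha, hpa⟩ := hp
    obtain ⟨b, hb, hqb⟩ := hq
    rw [Metric.mem_closedBall] at hpa hqb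
    have hab := hεle a ha b hb
    have hd : dist (x a) (x b) = ‖x a - x b‖ := dist_eq_norm _ _
    have := dist_triangle4 (x a) p q (x b)
    rw [dist_comm (x a) p] at this
    linarith
  have hsepL : ∀ p ∈ ⋃ a ∈ J, Metric.closedBall (x a) L,
      ∀ q ∈ ⋃ b ∈ Jᶜ, Metric.closedBall (x b) L, L < dist p q := by
    intro p hp q hq
    simp only [Set.mem_iUnion] at hp hq
    obtain ⟨a, ha, hpa⟩ := hp
    obtain ⟨b, hb, hqb⟩ := hq
    rw [Metric.mem_closedBall] at hpa hqb
    have hab := hsep a ha b (Finset.mem_compl.mpr (by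
      rcases Finset.mem_compl.mp hb with h; exact h))
    have hd : dist (x a) (x b) = ‖x a - x b‖ := dist_eq_norm _ _
    have := dist_triangle4 (x a) p q (x b)
    rw [dist_comm (x a) p] at this
    linarith
  -- disconnectedness
  obtain ⟨A, hA⟩ : ∃ A : Set (Fin d → ℝ),
      A = ⋃ a ∈ J, Metric.closedBall (x a) (3 * L / 2) := ⟨_, rfl⟩
  obtain ⟨B, hB⟩ : ∃ B : Set (Fin d → ℝ),
      B = ⋃ b ∈ Jᶜ, Metric.closedBall (x b) (3 * L / 2) := ⟨_, rfl⟩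
  have hLpos : (0:ℝ) ≤ 3 * L / 2 := by linarith
  have hxiA : x i ∈ A := hA ▸ Set.mem_biUnion hiJ (Metric.mem_closedBall_self hLpos)
  have hxjB : x j ∈ B := hB ▸ Set.mem_biUnion (Finset.mem_compl.mpr hjJ)
    (Metric.mem_closedBall_self hLpos)
  have hABdisj : ∀ p, p ∈ A → p ∈ B → False := by
    intro p hpA hpB
    rw [hA] at hpA; rw [hB] at hpB
    have := hsep32 p hpA p hpB
    simp at this
    linarith
  have hAclosed : IsClosed A := by
    rw [hA]
    apply Set.Finite.isClosed_biUnion (J.finite_toSet)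
    intro a _; exact Metric.isClosed_closedBall
  have hBclosed : IsClosed B := by
    rw [hB]
    apply Set.Finite.isClosed_biUnion ((Jᶜ : Finset (Fin N)).finite_toSet)
    intro a _; exact Metric.isClosed_closedBall
  have hcover : (⋃ a, Metric.closedBall (x a) (3 * L / 2)) = A ∪ B := by
    ext p
    rw [hA, hB]
    simp only [Set.mem_iUnion, Set.mem_union]
    constructor
    · rintro ⟨a, ha⟩
      by_cases h : a ∈ J
      · exact Or.inl ⟨a, h, ha⟩
      · exact Or.inr ⟨a, Finset.mem_compl.mpr h, ha⟩
    · rintro (⟨a, _, ha⟩ | ⟨a, _, ha⟩) <;> exact ⟨a, ha⟩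
  refine ⟨?_, J, ⟨i, hiJ⟩, fun h => hjJ (h ▸ Finset.mem_univ j), ⟨ε, hεpos, hsep32⟩, hsepL⟩
  intro hconn
  rw [hcover] at hconn
  have := hconn Bᶜ Aᶜ (hBclosed.isOpen_compl) (hAclosed.isOpen_compl)
    (by
      intro p hp
      rcases hp with hp | hp
      · exact Or.inl (fun hpB => hABdisj p hp hpB)
      · exact Or.inr (fun hpA => hABdisj p hpA hp))
    ⟨x i, Or.inl hxiA, fun hB' => hABdisj _ hxiA hB'⟩
    ⟨x j, Or.inr hxjB, fun hA' => hABdisj _ hA' hxjB⟩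
  obtain ⟨p, hp, hpB, hpA⟩ := this
  rcases hp with hp | hp
  · exact hpA hp
  · exact hpB hp
end
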